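/- Let q : ℝ → ℝ be continuous, nonnegative, x₀ ∈ ℝ, and let z solve z'' = q z on (-∞, x₀] with z(x₀) = 1, z'(x₀) = 0. Then z'(x) ≤ 0 for all x ≤ x₀. -/

import Mathlib

theorem stmt_7 (q : ℝ → ℝ) (hq : Continuous q) (hqnn : ∀ x, 0 ≤ q x) (x₀ : ℝ)
    (z : ℝ → ℝ) (hz : ContDiff ℝ 2 z)
    (hode : ∀ x ≤ x₀, deriv (deriv z) x = q x * z x)
    (hz0 : z x₀ = 1) (hz0' : deriv z x₀ = 0) :
    ∀ x ≤ x₀, deriv z x ≤ 0 := by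
  have hzd : Differentiable ℝ z := hz.differentiable (by norm_num)
  have hz1 : ContDiff ℝ 1 (deriv z) :=
    (contDiff_succ_iff_deriv.mp (show ContDiff ℝ (1+1 : ℕ) z by exact_mod_cast hz)).2.2
  have hzc : Continuous z := hzd.continuous
  have hz'd : Differentiable ℝ (deriv z) := hz1.differentiable one_ne_zero
  have hz'c : Continuous (deriv z) := hz'd.continuous
  -- Key: z' ≤ 0 on [a, x₀] whenever z'' ≥ 0 on (a, x₀)
  have key : ∀ a ≤ x₀, (∀ y ∈ Set.Ioo a x₀, 0 ≤ deriv (deriv z) y) →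
      ∀ x ∈ Set.Icc a x₀, deriv z x ≤ 0 := by
    intro a ha hnn x hx
    have hmono : MonotoneOn (deriv z) (Set.Icc a x₀) := by
      apply monotoneOn_of_deriv_nonneg (convex_Icc a x₀) hz'c.continuousOn
        (hz'd.differentiableOn.mono interior_subset)
      intro y hy
      rw [interior_Icc] at hy
      exact hnn y hy
    calc deriv z x ≤ deriv z x₀ := hmono hx (Set.right_mem_Icc.mpr ha) hx.2
      _ = 0 := hz0'
  -- Positivity of z on (-∞, x₀]
  have hpos : ∀ x ≤ x₀, 0 < z x := by
    by_contra h
    push_neg at h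
    obtain ⟨b, hb, hzb⟩ := h
    set S : Set ℝ := {x | x ≤ x₀ ∧ z x ≤ 0} with hS
    have hSne : S.Nonempty := ⟨b, hb, hzb⟩
    have hSbdd : BddAbove S := ⟨x₀, fun x hx => hx.1⟩
    set a := sSup S with ha
    have hSclosed : IsClosed S := by
      have : S = Set.Iic x₀ ∩ z ⁻¹' Set.Iic 0 := by
        ext x; simp [hS, Set.mem_setOf_eq, and_comm]
      rw [this]
      exact isClosed_Iic.inter (isClosed_Iic.preimage hzc)
    have haS : a ∈ S := hSclosed.csSup_mem hSne hSbdd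
    have hax : a ≤ x₀ := haS.1
    have hza : z a ≤ 0 := haS.2
    have hzpos : ∀ y ∈ Set.Ioo a x₀, 0 < z y := by
      intro y hy
      by_contra hzy
      push_neg at hzy
      have : y ∈ S := ⟨hy.2.le, hzy⟩
      exact absurd (le_csSup hSbdd this) (not_le.mpr hy.1)
    have h'le : ∀ x ∈ Set.Icc a x₀, deriv z x ≤ 0 := by
      apply key a hax
      intro y hy
      rw [hode y hy.2.le]
      exact mul_nonneg (hqnn y) (hzpos y hy).le
    have hanti : AntitoneOn z (Set.Icc a x₀) := by
      apply antitoneOn_of_deriv_nonpos (convex_Icc a x₀) hzc.continuousOn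
        (hzd.differentiableOn.mono interior_subset)
      intro y hy
      rw [interior_Icc] at hy
      exact h'le y (Set.Ioo_subset_Icc_self hy)
    have : (1:ℝ) ≤ z a := by
      rw [← hz0]
      exact hanti (Set.left_mem_Icc.mpr hax) (Set.right_mem_Icc.mpr hax) hax
    linarith
  intro x hx
  apply key x hx _ x (Set.left_mem_Icc.mpr hx)
  intro y hy
  rw [hode y hy.2.le]
  exact mul_nonneg (hqnn y) (hpos y hy.2.le).le
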